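/- (Theorem 1) Let B ≥ 1, ρ ∈ [0,1], ε > 0, and set c = (1 − ε(1+ε))/(1 + ε(1+ε)). Let O be a duplicate-free list of products with |O| ≤ B maximizing f among duplicate-free lists of length at most B. Suppose (𝒮, y) is feasible for P.A.1 (y ∉ 𝒮, Π_{i∈𝒮} θ_i ≥ ρ, |𝒮| < B) and satisfies g(𝒮 ∪ {y}) ≥ c · g(𝒮′ ∪ {y′}) for every P.A.1-feasible pair (𝒮′, y′). Then for any ordering S of 𝒮, the sequence S ⊕ y obtained by appending y to S satisfies f(S ⊕ y) ≥ c · ρ(1 − ρ) · f(O). -/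

import Mathlib

/-- MNL expected revenue of a finite set `S` of products, where product `i`
has revenue `α i` and preference weight `β i`. -/
noncomputable def g (α β : ℕ → ℝ) (S : Finset ℕ) : ℝ :=
  (∑ i ∈ S, α i * β i) / ((∑ i ∈ S, β i) + 1)

/-- Reachability of (0-based) position `t` of the sequence `S` under the
cascade browse model: the product of the continuation probabilities of all
earlier products. -/
noncomputable def reach (θ : ℕ → ℝ) (S : List ℕ) (t : ℕ) : ℝ :=
  ∏ j ∈ Finset.range t, θ (S.getD j 0)

/-- Expected revenue of a sequence of products `S` under the cascade browse
model combined with the MNL choice model. -/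
noncomputable def f (α β θ : ℕ → ℝ) (S : List ℕ) : ℝ :=
  (∑ t ∈ Finset.range (S.length - 1),
      reach θ S t * (1 - θ (S.getD t 0)) * g α β (S.take (t + 1)).toFinset)
    + reach θ S (S.length - 1) * g α β S.toFinset

section aux
variable {α β θ : ℕ → ℝ}

lemma aux_g_nonneg (hα : ∀ i, 0 ≤ α i) (hβ : ∀ i, 0 ≤ β i) (S : Finset ℕ) :
    0 ≤ g α β S := by
  have h1 : (0:ℝ) ≤ ∑ i ∈ S, β i := Finset.sum_nonneg fun i _ => hβ i
  exact div_nonneg (Finset.sum_nonneg fun i _ => mul_nonneg (hα i) (hβ i)) (by linarith)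

lemma aux_g_union_le (hα : ∀ i, 0 ≤ α i) (hβ : ∀ i, 0 ≤ β i) (A C : Finset ℕ)
    (hd : Disjoint A C) : g α β (A ∪ C) ≤ g α β A + g α β C := by
  have hxA : (0:ℝ) ≤ ∑ i ∈ A, β i := Finset.sum_nonneg fun i _ => hβ i
  have hxC : (0:ℝ) ≤ ∑ i ∈ C, β i := Finset.sum_nonneg fun i _ => hβ i
  have haA : (0:ℝ) ≤ ∑ i ∈ A, α i * β i := Finset.sum_nonneg fun i _ => mul_nonneg (hα i) (hβ i)
  have haC : (0:ℝ) ≤ ∑ i ∈ C, α i * β i := Finset.sum_nonneg fun i _ => mul_nonneg (hα i) (hβ i)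
  unfold g
  rw [Finset.sum_union hd, Finset.sum_union hd, add_div]
  gcongr <;> linarith

lemma aux_reach_zero (L : List ℕ) : reach θ L 0 = 1 := by simp [reach]

lemma aux_reach_succ (L : List ℕ) (t : ℕ) :
    reach θ L (t+1) = reach θ L t * θ (L.getD t 0) := Finset.prod_range_succ _ _

lemma aux_reach_nonneg (hθ : ∀ i, 0 ≤ θ i ∧ θ i ≤ 1) (L : List ℕ) (t : ℕ) :
    0 ≤ reach θ L t := Finset.prod_nonneg fun j _ => (hθ _).1

lemma aux_reach_le_one (hθ : ∀ i, 0 ≤ θ i ∧ θ i ≤ 1) (L : List ℕ) (t : ℕ) :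
    reach θ L t ≤ 1 := Finset.prod_le_one (fun j _ => (hθ _).1) (fun j _ => (hθ _).2)

lemma aux_getD_drop (L : List ℕ) (m j : ℕ) :
    (L.drop m).getD j 0 = L.getD (m+j) 0 := by
  simp [List.getD_eq_getElem?_getD, List.getElem?_drop]

lemma aux_reach_add (L : List ℕ) (m s : ℕ) :
    reach θ L (m+s) = reach θ L m * reach θ (L.drop m) s := by
  unfold reach
  rw [Finset.prod_range_add]
  exact congrArg _ (Finset.prod_congr rfl fun j _ => by rw [aux_getD_drop])

lemma aux_sum_w (L : List ℕ) (n : ℕ) :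
    ∑ t ∈ Finset.range n, reach θ L t * (1 - θ (L.getD t 0)) = 1 - reach θ L n := by
  have h : ∀ t ∈ Finset.range n, reach θ L t * (1 - θ (L.getD t 0))
      = reach θ L t - reach θ L (t+1) := fun t _ => by rw [aux_reach_succ]; ring
  rw [Finset.sum_congr rfl h, Finset.sum_range_sub', aux_reach_zero]

lemma aux_take_succ_toFinset (L : List ℕ) {t : ℕ} (ht : t < L.length) :
    (L.take (t+1)).toFinset = insert (L.getD t 0) (L.take t).toFinset := by
  rw [List.getD_eq_getElem _ _ ht]
  have h : L.take (t+1) = L.take t ++ [L[t]] := by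
    rw [List.take_succ, List.getElem?_eq_getElem ht]; rfl
  rw [h, List.toFinset_append]
  ext a
  simp [or_comm]

lemma aux_getD_not_mem_take {L : List ℕ} (hnd : L.Nodup) {t : ℕ} (ht : t < L.length) :
    L.getD t 0 ∉ (L.take t).toFinset := by
  rw [List.mem_toFinset, List.getD_eq_getElem _ _ ht]
  intro hmem
  have h2 : L[t] ∈ L.drop t := by
    rw [List.drop_eq_getElem_cons ht]; exact List.mem_cons_self
  have h3 := (List.nodup_append.mp (by rw [List.take_append_drop t L]; exact hnd)).2.2
  exact h3 L[t] hmem L[t] h2 rfl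

lemma aux_prod_take {L : List ℕ} (hnd : L.Nodup) {t : ℕ} (ht : t ≤ L.length) :
    ∏ i ∈ (L.take t).toFinset, θ i = reach θ L t := by
  induction t with
  | zero => simp [aux_reach_zero]
  | succ t ih =>
      have ht' : t < L.length := ht
      rw [aux_take_succ_toFinset L ht',
        Finset.prod_insert (aux_getD_not_mem_take hnd ht'), aux_reach_succ,
        ih (le_of_lt ht'), mul_comm]

lemma aux_card_take {L : List ℕ} (hnd : L.Nodup) {t : ℕ} (ht : t ≤ L.length) :
    (L.take t).toFinset.card = t := by
  rw [List.toFinset_card_of_nodup (hnd.sublist (List.take_sublist _ _)),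
    List.length_take]
  omega

lemma aux_g_take_le {B : ℕ} {ρ M : ℝ}
    (hM : ∀ (A : Finset ℕ) (y : ℕ), y ∉ A → ρ ≤ ∏ i ∈ A, θ i → A.card < B →
      g α β (insert y A) ≤ M)
    {L : List ℕ} (hnd : L.Nodup) {t : ℕ} (ht : t < L.length) (htB : t < B)
    (hr : ρ ≤ reach θ L t) : g α β (L.take (t+1)).toFinset ≤ M := by
  rw [aux_take_succ_toFinset L ht]
  refine hM _ _ (aux_getD_not_mem_take hnd ht) ?_ ?_
  · rw [aux_prod_take hnd (le_of_lt ht)]; exact hr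
  · rw [aux_card_take hnd (le_of_lt ht)]; exact htB

lemma aux_f_nonneg (hα : ∀ i, 0 ≤ α i) (hβ : ∀ i, 0 ≤ β i)
    (hθ : ∀ i, 0 ≤ θ i ∧ θ i ≤ 1) (L : List ℕ) : 0 ≤ f α β θ L := by
  unfold f
  have h1 : ∀ t ∈ Finset.range (L.length - 1),
      0 ≤ reach θ L t * (1 - θ (L.getD t 0)) * g α β (L.take (t + 1)).toFinset :=
    fun t _ => mul_nonneg (mul_nonneg (aux_reach_nonneg hθ L t)
      (by linarith [(hθ (L.getD t 0)).2])) (aux_g_nonneg hα hβ _)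
  exact add_nonneg (Finset.sum_nonneg h1)
    (mul_nonneg (aux_reach_nonneg hθ L _) (aux_g_nonneg hα hβ _))

end aux

section crux
variable {α β θ : ℕ → ℝ}

lemma aux_crux (hα : ∀ i, 0 ≤ α i) (hβ : ∀ i, 0 ≤ β i)
    (hθ : ∀ i, 0 ≤ θ i ∧ θ i ≤ 1) (B : ℕ) {ρ : ℝ} (hρ0 : 0 ≤ ρ) (hρ1 : ρ ≤ 1)
    {M F : ℝ} (hM0 : 0 ≤ M) (hF0 : 0 ≤ F)
    (hM : ∀ (A : Finset ℕ) (y : ℕ), y ∉ A → ρ ≤ ∏ i ∈ A, θ i → A.card < B →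
      g α β (insert y A) ≤ M)
    (hF : ∀ L' : List ℕ, L'.Nodup → L'.length ≤ B → f α β θ L' ≤ F)
    (L : List ℕ) (hnd : L.Nodup) (hLB : L.length ≤ B) :
    f α β θ L ≤ M + ρ * F := by
  have hwnn : ∀ t, 0 ≤ reach θ L t * (1 - θ (L.getD t 0)) :=
    fun t => mul_nonneg (aux_reach_nonneg hθ L t) (by linarith [(hθ (L.getD t 0)).2])
  have hρF : 0 ≤ ρ * F := mul_nonneg hρ0 hF0
  by_cases hall : ∀ t, t < L.length → ρ ≤ reach θ L t
  · -- Case A: every prefix is "feasible"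
    rcases Nat.eq_zero_or_pos L.length with h0 | hpos
    · have hnil : L = [] := List.length_eq_zero_iff.mp h0
      subst hnil
      simp only [f, g, reach, List.length_nil, List.toFinset_nil, Finset.sum_empty,
        Finset.range_zero, Nat.zero_sub, zero_div, mul_zero, add_zero]
      linarith
    have hgL : g α β L.toFinset ≤ M := by
      have h := aux_g_take_le hM hnd (t := L.length - 1) (by omega) (by omega)
        (hall _ (by omega))
      rwa [show L.length - 1 + 1 = L.length from by omega, List.take_length] at h
    have hsum : f α β θ L ≤ (∑ t ∈ Finset.range (L.length - 1),
        reach θ L t * (1 - θ (L.getD t 0)) * M) + reach θ L (L.length - 1) * M := by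
      refine add_le_add (Finset.sum_le_sum fun t ht => ?_)
        (mul_le_mul_of_nonneg_left hgL (aux_reach_nonneg hθ L _))
      have ht' : t < L.length - 1 := Finset.mem_range.mp ht
      exact mul_le_mul_of_nonneg_left
        (aux_g_take_le hM hnd (by omega) (by omega) (hall _ (by omega))) (hwnn t)
    have heq : (∑ t ∈ Finset.range (L.length - 1),
        reach θ L t * (1 - θ (L.getD t 0)) * M) + reach θ L (L.length - 1) * M = M := by
      rw [← Finset.sum_mul, aux_sum_w]; ring
    linarith
  · -- Case B : split at first infeasible position m
    push_neg at hall
    obtain ⟨t0, ht0k, ht0⟩ := hall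
    have hex : ∃ t, reach θ L t < ρ := ⟨t0, ht0⟩
    classical
    set m := Nat.find hex with hmdef
    have hm : reach θ L m < ρ := Nat.find_spec hex
    have hmin : ∀ s, s < m → ρ ≤ reach θ L s := fun s hs => not_lt.mp (Nat.find_min hex hs)
    have hm1 : 1 ≤ m := by
      rcases Nat.eq_zero_or_pos m with h | h
      · exfalso; rw [h, aux_reach_zero] at hm; linarith
      · exact h
    have hmt0 : m ≤ t0 := Nat.find_min' hex ht0
    have hmk : m ≤ L.length - 1 := by omega
    set n := L.length - 1 - m with hndef
    set D := L.drop m with hDdef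
    have hmn : m + n = L.length - 1 := by omega
    have hDlen : D.length = L.length - m := by rw [hDdef]; exact List.length_drop
    have hDn : D.length - 1 = n := by omega
    have hDnd : D.Nodup := hnd.sublist (List.drop_sublist _ _)
    have hfD : f α β θ D ≤ F := hF D hDnd (by omega)
    have hgtm : g α β (L.take m).toFinset ≤ M := by
      have h := aux_g_take_le hM hnd (t := m-1) (by omega) (by omega) (hmin _ (by omega))
      rwa [show m - 1 + 1 = m from by omega] at h
    have hdisj : ∀ s : ℕ, Disjoint (L.take m).toFinset ((D.take s)).toFinset := fun s => by
      rw [List.disjoint_toFinset_iff_disjoint]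
      have h1 := (List.nodup_append.mp (by rw [List.take_append_drop m L]; exact hnd)).2.2
      exact fun a ha hb => h1 a ha a ((List.take_sublist s D).subset hb) rfl
    have hgsplit : ∀ s : ℕ, g α β (L.take (m+s)).toFinset
        ≤ M + g α β (D.take s).toFinset := fun s => by
      rw [List.take_add, List.toFinset_append, ← hDdef]
      exact le_trans (aux_g_union_le hα hβ _ _ (hdisj s)) (add_le_add hgtm le_rfl)
    have hgL : g α β L.toFinset ≤ M + g α β D.toFinset := by
      have h := hgsplit D.length
      rwa [show m + D.length = L.length from by omega, List.take_length,
        List.take_length] at h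
    have hfL : f α β θ L =
        (∑ t ∈ Finset.range m,
          reach θ L t * (1 - θ (L.getD t 0)) * g α β (L.take (t + 1)).toFinset)
        + (∑ x ∈ Finset.range n,
          reach θ L (m + x) * (1 - θ (L.getD (m + x) 0))
            * g α β (L.take (m + x + 1)).toFinset)
        + reach θ L (m + n) * g α β L.toFinset := by
      unfold f
      rw [← hmn, Finset.sum_range_add]
    have hhead : (∑ t ∈ Finset.range m,
        reach θ L t * (1 - θ (L.getD t 0)) * g α β (L.take (t + 1)).toFinset)
        ≤ (1 - reach θ L m) * M := by
      calc (∑ t ∈ Finset.range m,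
          reach θ L t * (1 - θ (L.getD t 0)) * g α β (L.take (t + 1)).toFinset)
          ≤ ∑ t ∈ Finset.range m, reach θ L t * (1 - θ (L.getD t 0)) * M := by
            refine Finset.sum_le_sum fun t ht => ?_
            have ht' : t < m := Finset.mem_range.mp ht
            exact mul_le_mul_of_nonneg_left
              (aux_g_take_le hM hnd (by omega) (by omega) (hmin _ ht')) (hwnn t)
        _ = (1 - reach θ L m) * M := by rw [← Finset.sum_mul, aux_sum_w]
    have htail : (∑ x ∈ Finset.range n,
        reach θ L (m + x) * (1 - θ (L.getD (m + x) 0))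
          * g α β (L.take (m + x + 1)).toFinset)
        + reach θ L (m + n) * g α β L.toFinset
        ≤ reach θ L m * (M + f α β θ D) := by
      have step1 : (∑ x ∈ Finset.range n,
          reach θ L (m + x) * (1 - θ (L.getD (m + x) 0))
            * g α β (L.take (m + x + 1)).toFinset)
          + reach θ L (m + n) * g α β L.toFinset
          ≤ (∑ x ∈ Finset.range n,
          reach θ L (m + x) * (1 - θ (L.getD (m + x) 0))
            * (M + g α β (D.take (x + 1)).toFinset))
          + reach θ L (m + n) * (M + g α β D.toFinset) := by
        refine add_le_add (Finset.sum_le_sum fun x _ => ?_)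
          (mul_le_mul_of_nonneg_left hgL (aux_reach_nonneg hθ L _))
        exact mul_le_mul_of_nonneg_left (hgsplit (x + 1)) (hwnn (m + x))
      have step2 : (∑ x ∈ Finset.range n,
          reach θ L (m + x) * (1 - θ (L.getD (m + x) 0))
            * (M + g α β (D.take (x + 1)).toFinset))
          + reach θ L (m + n) * (M + g α β D.toFinset)
          = reach θ L m * (M + f α β θ D) := by
        have hterm : ∀ x ∈ Finset.range n,
            reach θ L (m + x) * (1 - θ (L.getD (m + x) 0))
              * (M + g α β (D.take (x + 1)).toFinset)
            = reach θ L m * (reach θ D x * (1 - θ (D.getD x 0))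
              * (M + g α β (D.take (x + 1)).toFinset)) := fun x _ => by
          rw [aux_reach_add, ← hDdef, hDdef, aux_getD_drop, ← hDdef]; ring
        rw [Finset.sum_congr rfl hterm, ← Finset.mul_sum, aux_reach_add L m n, ← hDdef,
          mul_assoc, ← mul_add]
        congr 1
        have hexp : ∀ x ∈ Finset.range n,
            reach θ D x * (1 - θ (D.getD x 0)) * (M + g α β (D.take (x + 1)).toFinset)
            = reach θ D x * (1 - θ (D.getD x 0)) * M
              + reach θ D x * (1 - θ (D.getD x 0)) * g α β (D.take (x + 1)).toFinset :=
          fun x _ => by ring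
        unfold f
        rw [hDn, Finset.sum_congr rfl hexp, Finset.sum_add_distrib, ← Finset.sum_mul,
          aux_sum_w]
        ring
      linarith
    have h3 : reach θ L m * (M + f α β θ D) ≤ reach θ L m * (M + F) :=
      mul_le_mul_of_nonneg_left (by linarith) (aux_reach_nonneg hθ L _)
    have e1 : (1 - reach θ L m) * M + reach θ L m * (M + F) = M + reach θ L m * F := by
      ring
    have e2 : reach θ L m * F ≤ ρ * F := mul_le_mul_of_nonneg_right hm.le hF0
    linarith

end crux
section final
variable {α β θ : ℕ → ℝ}

lemma aux_append (hα : ∀ i, 0 ≤ α i) (hβ : ∀ i, 0 ≤ β i)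
    (hθ : ∀ i, 0 ≤ θ i ∧ θ i ≤ 1) (S : List ℕ) (hSnd : S.Nodup) (y : ℕ) :
    (∏ i ∈ S.toFinset, θ i) * g α β (insert y S.toFinset) ≤ f α β θ (S ++ [y]) := by
  have hlen : (S ++ [y]).length = S.length + 1 := by simp
  have hgetD : ∀ j, j < S.length → (S ++ [y]).getD j 0 = S.getD j 0 := by
    intro j hj
    rw [List.getD_eq_getElem?_getD, List.getD_eq_getElem?_getD,
      List.getElem?_append_left hj]
  have hreach : reach θ (S ++ [y]) S.length = ∏ i ∈ S.toFinset, θ i := by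
    have h := aux_prod_take (θ := θ) hSnd (le_refl S.length)
    rw [List.take_length] at h
    rw [h]
    unfold reach
    exact Finset.prod_congr rfl fun j hj => by rw [hgetD j (Finset.mem_range.mp hj)]
  have hset : (S ++ [y]).toFinset = insert y S.toFinset := by
    rw [List.toFinset_append]; ext a; simp [or_comm]
  have hnn : 0 ≤ ∑ t ∈ Finset.range S.length,
      reach θ (S ++ [y]) t * (1 - θ ((S ++ [y]).getD t 0))
        * g α β ((S ++ [y]).take (t + 1)).toFinset :=
    Finset.sum_nonneg fun t _ => mul_nonneg (mul_nonneg (aux_reach_nonneg hθ _ _)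
      (by linarith [(hθ ((S ++ [y]).getD t 0)).2])) (aux_g_nonneg hα hβ _)
  unfold f
  rw [hlen]
  simp only [Nat.add_sub_cancel]
  rw [hreach, hset]
  linarith

end final

/-- Theorem 1: appending `y` to any ordering of a
`c`-approximately optimal P.A.1 solution `(𝒮, y)` yields a sequence with
expected revenue at least `c · ρ(1-ρ) · f(O)`, where
`c = (1 - ε(1+ε))/(1 + ε(1+ε))`. -/
theorem stmt8 (α β θ : ℕ → ℝ) (hα : ∀ i, 0 ≤ α i) (hβ : ∀ i, 0 ≤ β i)
    (hθ : ∀ i, 0 ≤ θ i ∧ θ i ≤ 1)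
    (B : ℕ) (hB : 1 ≤ B) (ρ ε : ℝ) (hρ0 : 0 ≤ ρ) (hρ1 : ρ ≤ 1) (hε : 0 < ε)
    (O : List ℕ) (hO : O.Nodup) (hOB : O.length ≤ B)
    (hopt : ∀ L : List ℕ, L.Nodup → L.length ≤ B → f α β θ L ≤ f α β θ O)
    (𝒮 : Finset ℕ) (y : ℕ) (hy : y ∉ 𝒮)
    (hC1 : ρ ≤ ∏ i ∈ 𝒮, θ i) (hC2 : 𝒮.card < B)
    (happrox : ∀ (𝒮' : Finset ℕ) (y' : ℕ), y' ∉ 𝒮' → ρ ≤ ∏ i ∈ 𝒮', θ i →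
        𝒮'.card < B →
        (1 - ε * (1 + ε)) / (1 + ε * (1 + ε)) * g α β (insert y' 𝒮')
          ≤ g α β (insert y 𝒮))
    (S : List ℕ) (hSnd : S.Nodup) (hStoF : S.toFinset = 𝒮) :
    (1 - ε * (1 + ε)) / (1 + ε * (1 + ε)) * (ρ * (1 - ρ)) * f α β θ O
      ≤ f α β θ (S ++ [y]) := by
  have hfO : 0 ≤ f α β θ O := aux_f_nonneg hα hβ hθ O
  have hρ1' : (0:ℝ) ≤ 1 - ρ := by linarith
  set c := (1 - ε * (1 + ε)) / (1 + ε * (1 + ε)) with hc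
  by_cases hcpos : 0 < c
  · have hG0 : 0 ≤ g α β (insert y 𝒮) := aux_g_nonneg hα hβ _
    have hM : ∀ (A : Finset ℕ) (y' : ℕ), y' ∉ A → ρ ≤ ∏ i ∈ A, θ i → A.card < B →
        g α β (insert y' A) ≤ g α β (insert y 𝒮) / c := by
      intro A y' h1 h2 h3
      rw [le_div_iff₀ hcpos]
      calc g α β (insert y' A) * c = c * g α β (insert y' A) := mul_comm _ _
        _ ≤ _ := happrox A y' h1 h2 h3
    have hM0 : 0 ≤ g α β (insert y 𝒮) / c := div_nonneg hG0 hcpos.le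
    have hcrux := aux_crux hα hβ hθ B hρ0 hρ1 hM0 hfO hM hopt O hO hOB
    have h3 : c * ((1 - ρ) * f α β θ O) ≤ g α β (insert y 𝒮) := by
      rw [← le_div_iff₀' hcpos]
      linarith
    have happend := aux_append hα hβ hθ S hSnd y
    rw [hStoF] at happend
    have h4 : ρ * g α β (insert y 𝒮) ≤ f α β θ (S ++ [y]) :=
      le_trans (mul_le_mul_of_nonneg_right hC1 hG0) happend
    calc c * (ρ * (1 - ρ)) * f α β θ O = ρ * (c * ((1 - ρ) * f α β θ O)) := by ring
      _ ≤ ρ * g α β (insert y 𝒮) := mul_le_mul_of_nonneg_left h3 hρ0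
      _ ≤ f α β θ (S ++ [y]) := h4
  · push_neg at hcpos
    have h2 : 0 ≤ ρ * (1 - ρ) * f α β θ O := mul_nonneg (mul_nonneg hρ0 hρ1') hfO
    have h1 : c * (ρ * (1 - ρ)) * f α β θ O ≤ 0 := by nlinarith
    exact le_trans h1 (aux_f_nonneg hα hβ hθ _)
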